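/- arXiv:1804.01022 — 6 statements merged into one kernel-verified Lean document; each statement's English description precedes it below -/
import Mathlib

section
/- Let 𝔸 be a complex unital algebra, n ≥ 1, and let A be an n×n lower triangular matrix over 𝔸 (A_{ij} = 0 for i < j). Let λ ∈ ℂ be such that λ·1 − A_{ii} is invertible in 𝔸 for every i. Then the matrix λ·1 − A is invertible, its inverse R is lower triangular, and for i ≥ j the entries of R are given by R_{ij} = ∑ (λ·1 − A_{i₁i₁})⁻¹ A_{i₁i₂} (λ·1 − A_{i₂i₂})⁻¹ A_{i₂i₃} ⋯ A_{i_{m−1}i_m} (λ·1 − A_{i_mi_m})⁻¹, the sum ranging over all chains from i to j; in particular R_{ii} = (λ·1 − A_{ii})⁻¹ and R_{i+1,i} = (λ·1 − A_{i+1,i+1})⁻¹ A_{i+1,i} (λ·1 − A_{ii})⁻¹. -/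
open Finset

/-- The word `D_{i₁} A_{i₁ i₂} D_{i₂} A_{i₂ i₃} ⋯ A_{i_{m-1} i_m} D_{i_m}`
associated to a chain `[i₁, i₂, …, i_m]`, where `D_i` is the resolvent of the
diagonal block `A_{ii}`. -/
def chainWord {R : Type*} [Ring R] {n : ℕ} (Dinv : Fin n → R)
    (Off : Fin n → Fin n → R) : List (Fin n) → R
  | [] => 1
  | [a] => Dinv a
  | a :: b :: rest => Dinv a * Off a b * chainWord Dinv Off (b :: rest)

section Aux

variable {R : Type*} [Ring R] {n : ℕ} (D : Fin n → R) (O : Fin n → Fin n → R)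

lemma sort_insert_max {a : Fin n} {s : Finset (Fin n)} (h1 : ∀ b ∈ s, b ≤ a)
    (h2 : a ∉ s) : (insert a s).sort (· ≤ ·) = s.sort (· ≤ ·) ++ [a] := by
  refine (fun p s₂ => List.Perm.eq_of_pairwise' (Finset.pairwise_sort _ _) s₂ p) ?_ ?_
  · exact ((Finset.sort_perm_toList _ _).trans
      ((Finset.toList_insert h2).trans
        ((Finset.sort_perm_toList s (· ≤ ·)).symm.cons a))).trans
      (List.perm_append_singleton _ _).symm
  · rw [List.pairwise_append]
    refine ⟨Finset.pairwise_sort _ _, List.pairwise_singleton _ _, ?_⟩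
    intro x hx b hb
    rw [List.mem_singleton] at hb
    subst hb
    exact h1 x ((Finset.mem_sort _).1 hx)

lemma chainWord_cons' {a : Fin n} {l : List (Fin n)} (h : l ≠ []) :
    chainWord D O (a :: l) = D a * O a (l.head h) * chainWord D O l := by
  cases l with
  | nil => exact absurd rfl h
  | cons b rest => rfl

lemma chainWord_append₂ (l : List (Fin n)) (k j : Fin n) :
    chainWord D O (l ++ [k, j]) = chainWord D O (l ++ [k]) * O k j * D j := by
  induction l with
  | nil => simp [chainWord]
  | cons b rest ih =>
      have hne : rest ++ [k, j] ≠ [] := by simp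
      have hne' : rest ++ [k] ≠ [] := by simp
      have hhead : (rest ++ [k, j]).head hne = (rest ++ [k]).head hne' := by
        cases rest <;> rfl
      rw [List.cons_append, chainWord_cons' D O hne, hhead, ih,
        List.cons_append, chainWord_cons' D O hne']
      noncomm_ring

end Aux

section FSum

variable {R : Type*} [Ring R] {n : ℕ} (D : Fin n → R) (O : Fin n → Fin n → R)

def Fsum (i j : Fin n) : R :=
  ∑ s ∈ (Finset.Icc j i).powerset.filter (fun s => i ∈ s ∧ j ∈ s),
    chainWord D O ((s.sort (· ≤ ·)).reverse)

lemma Fsum_diag (i : Fin n) : Fsum D O i i = D i := by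
  have hset : (Finset.Icc i i).powerset.filter (fun s => i ∈ s ∧ i ∈ s) = {{i}} := by
    ext s
    simp only [Finset.Icc_self, Finset.mem_filter, Finset.mem_powerset,
      Finset.subset_singleton_iff, Finset.mem_singleton, and_self]
    constructor
    · rintro ⟨h1 | h1, h2⟩
      · subst h1; simp at h2
      · exact h1
    · rintro rfl; simp
  rw [Fsum, hset]
  simp [chainWord]

lemma Fsum_left {i j : Fin n} (h : j < i) :
    Fsum D O i j = D i * ∑ k ∈ Finset.Ico j i, O i k * Fsum D O k j := by
  rw [Finset.mul_sum]
  have hcongr : ∀ k ∈ Finset.Ico j i, D i * (O i k * Fsum D O k j)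
      = ∑ t ∈ (Finset.Icc j k).powerset.filter (fun t => k ∈ t ∧ j ∈ t),
          D i * O i k * chainWord D O ((t.sort (· ≤ ·)).reverse) := by
    intro k _
    rw [Fsum, Finset.mul_sum, Finset.mul_sum]
    exact Finset.sum_congr rfl fun t _ => by rw [mul_assoc]
  rw [Finset.sum_congr rfl hcongr, Finset.sum_sigma']
  rw [Fsum]
  refine Finset.sum_nbij' (fun s => ⟨WithBot.unbotD j ((s.erase i).max), s.erase i⟩)
    (fun p => insert i p.2) ?_ ?_ ?_ ?_ ?_
  · -- membership forward
    intro s hs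
    rw [Finset.mem_filter, Finset.mem_powerset] at hs
    obtain ⟨hsub, his, hjs⟩ := hs
    set t := s.erase i with ht
    have hjt : j ∈ t := Finset.mem_erase.2 ⟨h.ne, hjs⟩
    have htne : t.Nonempty := ⟨j, hjt⟩
    have hmax : WithBot.unbotD j t.max = t.max' htne := by
      rw [← Finset.coe_max' htne, WithBot.unbotD_coe]
    have hmt : t.max' htne ∈ t := Finset.max'_mem t htne
    have hms : t.max' htne ∈ s := Finset.mem_of_mem_erase hmt
    have hlt : t.max' htne < i :=
      lt_of_le_of_ne (Finset.mem_Icc.1 (hsub hms)).2 (Finset.ne_of_mem_erase hmt)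
    rw [Finset.mem_sigma, Finset.mem_filter, Finset.mem_powerset]
    refine ⟨?_, ?_, ?_, ?_⟩
    · rw [hmax, Finset.mem_Ico]
      exact ⟨Finset.le_max' t j hjt, hlt⟩
    · intro x hx
      rw [hmax, Finset.mem_Icc]
      exact ⟨(Finset.mem_Icc.1 (hsub (Finset.mem_of_mem_erase hx))).1,
        Finset.le_max' t x hx⟩
    · rw [hmax]; exact hmt
    · exact hjt
  · -- membership backward
    rintro ⟨k, t⟩ hp
    dsimp only
    rw [Finset.mem_sigma, Finset.mem_filter, Finset.mem_powerset] at hp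
    obtain ⟨hk, hsub, hkt, hjt⟩ := hp
    rw [Finset.mem_Ico] at hk
    rw [Finset.mem_filter, Finset.mem_powerset]
    refine ⟨?_, Finset.mem_insert_self _ _, Finset.mem_insert_of_mem hjt⟩
    intro x hx
    rcases Finset.mem_insert.1 hx with rfl | hx
    · exact Finset.mem_Icc.2 ⟨h.le, le_refl _⟩
    · have := Finset.mem_Icc.1 (hsub hx)
      exact Finset.mem_Icc.2 ⟨this.1, this.2.trans hk.2.le⟩
  · -- left inverse
    intro s hs
    rw [Finset.mem_filter] at hs
    exact Finset.insert_erase hs.2.1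
  · -- right inverse
    rintro ⟨k, t⟩ hp
    dsimp only
    rw [Finset.mem_sigma, Finset.mem_filter, Finset.mem_powerset] at hp
    obtain ⟨hk, hsub, hkt, hjt⟩ := hp
    rw [Finset.mem_Ico] at hk
    have hnotin : i ∉ t := fun hx =>
      absurd ((Finset.mem_Icc.1 (hsub hx)).2.trans_lt hk.2) (lt_irrefl i)
    have herase : (insert i t).erase i = t := Finset.erase_insert hnotin
    have htne : t.Nonempty := ⟨k, hkt⟩
    have hmaxk : t.max' htne = k :=
      le_antisymm (Finset.max'_le t htne _ fun x hx => (Finset.mem_Icc.1 (hsub hx)).2)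
        (Finset.le_max' t k hkt)
    have : WithBot.unbotD j ((insert i t).erase i).max = k := by
      rw [herase, ← Finset.coe_max' htne, WithBot.unbotD_coe, hmaxk]
    exact Sigma.ext (by rw [this]) (by rw [herase])
  · -- values
    intro s hs
    rw [Finset.mem_filter, Finset.mem_powerset] at hs
    obtain ⟨hsub, his, hjs⟩ := hs
    set t := s.erase i with ht
    have hjt : j ∈ t := Finset.mem_erase.2 ⟨h.ne, hjs⟩
    have htne : t.Nonempty := ⟨j, hjt⟩
    set k := t.max' htne with hkdef
    have hmax : WithBot.unbotD j t.max = k := by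
      rw [← Finset.coe_max' htne, WithBot.unbotD_coe]
    have hnotin : i ∉ t := Finset.notMem_erase i s
    have hs_eq : s = insert i t := (Finset.insert_erase his).symm
    have hle : ∀ b ∈ t, b ≤ i := fun b hb =>
      (Finset.mem_Icc.1 (hsub (Finset.mem_of_mem_erase hb))).2
    have hsort1 : s.sort (· ≤ ·) = t.sort (· ≤ ·) ++ [i] := by
      rw [hs_eq]; exact sort_insert_max hle hnotin
    have hkt : k ∈ t := Finset.max'_mem t htne
    have hknotin : k ∉ t.erase k := Finset.notMem_erase k t
    have ht_eq : t = insert k (t.erase k) := (Finset.insert_erase hkt).symm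
    have hle2 : ∀ b ∈ t.erase k, b ≤ k := fun b hb =>
      Finset.le_max' t b (Finset.mem_of_mem_erase hb)
    have hsort2 : t.sort (· ≤ ·) = (t.erase k).sort (· ≤ ·) ++ [k] := by
      conv_lhs => rw [ht_eq]
      exact sort_insert_max hle2 hknotin
    show chainWord D O ((s.sort (· ≤ ·)).reverse)
        = D i * O i (WithBot.unbotD j t.max) * chainWord D O ((t.sort (· ≤ ·)).reverse)
    rw [hmax, hsort1, List.reverse_append, List.reverse_singleton, hsort2,
      List.reverse_append, List.reverse_singleton, List.singleton_append,
      List.singleton_append]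
    rfl

lemma Fsum_right {i j : Fin n} (h : j < i) :
    Fsum D O i j = (∑ k ∈ Finset.Ioc j i, Fsum D O i k * O k j) * D j := by
  rw [Finset.sum_mul]
  have hcongr : ∀ k ∈ Finset.Ioc j i, Fsum D O i k * O k j * D j
      = ∑ t ∈ (Finset.Icc k i).powerset.filter (fun t => i ∈ t ∧ k ∈ t),
          chainWord D O ((t.sort (· ≤ ·)).reverse) * O k j * D j := by
    intro k _
    rw [Fsum, Finset.sum_mul, Finset.sum_mul]
  rw [Finset.sum_congr rfl hcongr, Finset.sum_sigma']
  rw [Fsum]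
  refine Finset.sum_nbij' (fun s => ⟨WithTop.untopD i ((s.erase j).min), s.erase j⟩)
    (fun p => insert j p.2) ?_ ?_ ?_ ?_ ?_
  · intro s hs
    rw [Finset.mem_filter, Finset.mem_powerset] at hs
    obtain ⟨hsub, his, hjs⟩ := hs
    set t := s.erase j with ht
    have hit : i ∈ t := Finset.mem_erase.2 ⟨h.ne', his⟩
    have htne : t.Nonempty := ⟨i, hit⟩
    have hmin : WithTop.untopD i t.min = t.min' htne := by
      rw [← Finset.coe_min' htne, WithTop.untopD_coe]
    have hmt : t.min' htne ∈ t := Finset.min'_mem t htne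
    have hms : t.min' htne ∈ s := Finset.mem_of_mem_erase hmt
    have hgt : j < t.min' htne :=
      lt_of_le_of_ne (Finset.mem_Icc.1 (hsub hms)).1 (Finset.ne_of_mem_erase hmt).symm
    rw [Finset.mem_sigma, Finset.mem_filter, Finset.mem_powerset]
    refine ⟨?_, ?_, ?_, ?_⟩
    · rw [hmin, Finset.mem_Ioc]
      exact ⟨hgt, (Finset.mem_Icc.1 (hsub hms)).2⟩
    · intro x hx
      rw [hmin, Finset.mem_Icc]
      exact ⟨Finset.min'_le t x hx,
        (Finset.mem_Icc.1 (hsub (Finset.mem_of_mem_erase hx))).2⟩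
    · exact hit
    · rw [hmin]; exact hmt
  · rintro ⟨k, t⟩ hp
    dsimp only
    rw [Finset.mem_sigma, Finset.mem_filter, Finset.mem_powerset] at hp
    obtain ⟨hk, hsub, hit, hkt⟩ := hp
    rw [Finset.mem_Ioc] at hk
    rw [Finset.mem_filter, Finset.mem_powerset]
    refine ⟨?_, Finset.mem_insert_of_mem hit, Finset.mem_insert_self _ _⟩
    intro x hx
    rcases Finset.mem_insert.1 hx with rfl | hx
    · exact Finset.mem_Icc.2 ⟨le_refl _, h.le⟩
    · have := Finset.mem_Icc.1 (hsub hx)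
      exact Finset.mem_Icc.2 ⟨hk.1.le.trans this.1, this.2⟩
  · intro s hs
    rw [Finset.mem_filter] at hs
    exact Finset.insert_erase hs.2.2
  · rintro ⟨k, t⟩ hp
    dsimp only
    rw [Finset.mem_sigma, Finset.mem_filter, Finset.mem_powerset] at hp
    obtain ⟨hk, hsub, hit, hkt⟩ := hp
    rw [Finset.mem_Ioc] at hk
    have hnotin : j ∉ t := fun hx =>
      absurd (hk.1.trans_le (Finset.mem_Icc.1 (hsub hx)).1) (lt_irrefl j)
    have herase : (insert j t).erase j = t := Finset.erase_insert hnotin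
    have htne : t.Nonempty := ⟨k, hkt⟩
    have hmink : t.min' htne = k :=
      le_antisymm (Finset.min'_le t k hkt)
        (Finset.le_min' t htne _ fun x hx => (Finset.mem_Icc.1 (hsub hx)).1)
    have : WithTop.untopD i ((insert j t).erase j).min = k := by
      rw [herase, ← Finset.coe_min' htne, WithTop.untopD_coe, hmink]
    exact Sigma.ext (by rw [this]) (by rw [herase])
  · intro s hs
    rw [Finset.mem_filter, Finset.mem_powerset] at hs
    obtain ⟨hsub, his, hjs⟩ := hs
    set t := s.erase j with ht
    have hit : i ∈ t := Finset.mem_erase.2 ⟨h.ne', his⟩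
    have htne : t.Nonempty := ⟨i, hit⟩
    set k := t.min' htne with hkdef
    have hmin : WithTop.untopD i t.min = k := by
      rw [← Finset.coe_min' htne, WithTop.untopD_coe]
    have hnotin : j ∉ t := Finset.notMem_erase j s
    have hs_eq : s = insert j t := (Finset.insert_erase hjs).symm
    have hle : ∀ b ∈ t, j ≤ b := fun b hb =>
      (Finset.mem_Icc.1 (hsub (Finset.mem_of_mem_erase hb))).1
    have hsort1 : s.sort (· ≤ ·) = j :: t.sort (· ≤ ·) := by
      rw [hs_eq]; exact Finset.sort_insert (h₁ := hle) (h₂ := hnotin)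
    have hkt : k ∈ t := Finset.min'_mem t htne
    have hknotin : k ∉ t.erase k := Finset.notMem_erase k t
    have ht_eq : t = insert k (t.erase k) := (Finset.insert_erase hkt).symm
    have hle2 : ∀ b ∈ t.erase k, k ≤ b := fun b hb =>
      Finset.min'_le t b (Finset.mem_of_mem_erase hb)
    have hsort2 : t.sort (· ≤ ·) = k :: (t.erase k).sort (· ≤ ·) := by
      conv_lhs => rw [ht_eq]
      exact Finset.sort_insert (h₁ := hle2) (h₂ := hknotin)
    show chainWord D O ((s.sort (· ≤ ·)).reverse)
        = chainWord D O ((t.sort (· ≤ ·)).reverse) * O (WithTop.untopD i t.min) j * D j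
    rw [hmin, hsort1, List.reverse_cons]
    conv_lhs => rw [hsort2, List.reverse_cons]
    rw [List.append_assoc]
    conv_rhs => rw [hsort2, List.reverse_cons]
    exact chainWord_append₂ D O _ k j

end FSum

/-- If `A` is a lower triangular matrix over a complex unital algebra `𝔸` and
`λ·1 − A_{ii}` is invertible for every `i`, then `λ·1 − A` is invertible, its inverse
is lower triangular, and for `i ≥ j` the entries of the inverse are the sums over all
decreasing chains `i = i₁ > i₂ > ⋯ > i_m = j` of the words
`(λ1−A_{i₁i₁})⁻¹ A_{i₁i₂} (λ1−A_{i₂i₂})⁻¹ ⋯ A_{i_{m-1}i_m} (λ1−A_{i_mi_m})⁻¹`. -/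
theorem stmt_2 {𝔸 : Type*} [Ring 𝔸] [Algebra ℂ 𝔸] (n : ℕ) (hn : 1 ≤ n)
    (A : Matrix (Fin n) (Fin n) 𝔸)
    (htri : ∀ i j : Fin n, i < j → A i j = 0)
    (lam : ℂ)
    (Rdiag : Fin n → 𝔸)
    (hRdiag : ∀ i : Fin n, (lam • (1 : 𝔸) - A i i) * Rdiag i = 1 ∧
      Rdiag i * (lam • (1 : 𝔸) - A i i) = 1)
    (R : Matrix (Fin n) (Fin n) 𝔸)
    (hRtri : ∀ i j : Fin n, i < j → R i j = 0)
    (hR : ∀ i j : Fin n, j ≤ i →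
      R i j = ∑ s ∈ (Finset.Icc j i).powerset.filter (fun s => i ∈ s ∧ j ∈ s),
        chainWord Rdiag A ((s.sort (· ≤ ·)).reverse)) :
    (lam • (1 : Matrix (Fin n) (Fin n) 𝔸) - A) * R = 1 ∧
      R * (lam • (1 : Matrix (Fin n) (Fin n) 𝔸) - A) = 1 ∧
      (∀ i : Fin n, R i i = Rdiag i) := by
  have hRF : ∀ i j : Fin n, j ≤ i → R i j = Fsum Rdiag A i j := fun i j hj => hR i j hj
  have key1 : ∀ i j : Fin n,
      ((lam • (1 : Matrix (Fin n) (Fin n) 𝔸) - A) * R) i j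
        = lam • R i j - ∑ k, A i k * R k j := by
    intro i j
    rw [Matrix.mul_apply]
    simp [Matrix.sub_apply, Matrix.smul_apply, Matrix.one_apply, sub_mul,
      Finset.sum_sub_distrib, ite_mul, smul_mul_assoc]
  have key2 : ∀ i j : Fin n,
      (R * (lam • (1 : Matrix (Fin n) (Fin n) 𝔸) - A)) i j
        = lam • R i j - ∑ k, R i k * A k j := by
    intro i j
    rw [Matrix.mul_apply]
    simp [Matrix.sub_apply, Matrix.smul_apply, Matrix.one_apply, mul_sub,
      Finset.sum_sub_distrib, mul_ite, mul_smul_comm]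
  refine ⟨?_, ?_, fun i => by rw [hRF i i le_rfl, Fsum_diag Rdiag A i]⟩
  · ext i j
    rw [key1, Matrix.one_apply]
    rcases lt_trichotomy i j with hij | rfl | hij
    · rw [if_neg hij.ne, hRtri i j hij, smul_zero, Finset.sum_eq_zero, sub_zero]
      intro k _
      rcases le_or_gt k i with hk | hk
      · rw [hRtri k j (lt_of_le_of_lt hk hij), mul_zero]
      · rw [htri i k hk, zero_mul]
    · rw [if_pos rfl]
      rw [Finset.sum_eq_single i (fun k _ hk => ?_) (fun h => absurd (Finset.mem_univ i) h)]
      · rw [hRF i i le_rfl, Fsum_diag Rdiag A i]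
        have hD := (hRdiag i).1
        rw [sub_mul, smul_mul_assoc, one_mul] at hD
        exact hD
      · rcases lt_or_gt_of_ne hk with hlt | hlt
        · rw [hRtri k i hlt, mul_zero]
        · rw [htri i k hlt, zero_mul]
    · rw [if_neg (ne_of_gt hij)]
      have hsum : ∑ k, A i k * R k j = ∑ k ∈ Finset.Icc j i, A i k * R k j := by
        symm
        apply Finset.sum_subset (Finset.subset_univ _)
        intro k _ hk
        rw [Finset.mem_Icc, not_and_or] at hk
        rcases hk with hk | hk
        · rw [hRtri k j (lt_of_not_ge hk), mul_zero]
        · rw [htri i k (lt_of_not_ge hk), zero_mul]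
      rw [hsum, ← Finset.Ico_insert_right hij.le,
        Finset.sum_insert Finset.right_notMem_Ico]
      have hrw : ∀ k ∈ Finset.Ico j i, A i k * R k j = A i k * Fsum Rdiag A k j := by
        intro k hk
        rw [hRF k j (Finset.mem_Ico.1 hk).1]
      rw [Finset.sum_congr rfl hrw]
      set S := ∑ k ∈ Finset.Ico j i, A i k * Fsum Rdiag A k j with hS
      clear_value S
      have hRij : R i j = Rdiag i * S := by
        rw [hRF i j hij.le, Fsum_left Rdiag A hij, ← hS]
      rw [hRij]
      have : lam • (Rdiag i * S) - (A i i * (Rdiag i * S) + S)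
          = ((lam • (1 : 𝔸) - A i i) * Rdiag i) * S - S := by
        simp only [Algebra.smul_def]; noncomm_ring
      rw [this, (hRdiag i).1, one_mul, sub_self]
  · ext i j
    rw [key2, Matrix.one_apply]
    rcases lt_trichotomy i j with hij | rfl | hij
    · rw [if_neg hij.ne, hRtri i j hij, smul_zero, Finset.sum_eq_zero, sub_zero]
      intro k _
      rcases le_or_gt k i with hk | hk
      · rw [htri k j (lt_of_le_of_lt hk hij), mul_zero]
      · rw [hRtri i k hk, zero_mul]
    · rw [if_pos rfl]
      rw [Finset.sum_eq_single i (fun k _ hk => ?_) (fun h => absurd (Finset.mem_univ i) h)]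
      · rw [hRF i i le_rfl, Fsum_diag Rdiag A i]
        have hD := (hRdiag i).2
        rw [mul_sub, mul_smul_comm, mul_one] at hD
        exact hD
      · rcases lt_or_gt_of_ne hk with hlt | hlt
        · rw [htri k i hlt, mul_zero]
        · rw [hRtri i k hlt, zero_mul]
    · rw [if_neg (ne_of_gt hij)]
      have hsum : ∑ k, R i k * A k j = ∑ k ∈ Finset.Icc j i, R i k * A k j := by
        symm
        apply Finset.sum_subset (Finset.subset_univ _)
        intro k _ hk
        rw [Finset.mem_Icc, not_and_or] at hk
        rcases hk with hk | hk
        · rw [htri k j (lt_of_not_ge hk), mul_zero]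
        · rw [hRtri i k (lt_of_not_ge hk), zero_mul]
      rw [hsum, ← Finset.Ioc_insert_left hij.le,
        Finset.sum_insert Finset.left_notMem_Ioc]
      have hrw : ∀ k ∈ Finset.Ioc j i, R i k * A k j = Fsum Rdiag A i k * A k j := by
        intro k hk
        rw [hRF i k (Finset.mem_Ioc.1 hk).2]
      rw [Finset.sum_congr rfl hrw]
      set T := ∑ k ∈ Finset.Ioc j i, Fsum Rdiag A i k * A k j with hT
      clear_value T
      have hRij : R i j = T * Rdiag j := by
        rw [hRF i j hij.le, Fsum_right Rdiag A hij, ← hT]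
      rw [hRij]
      have : lam • (T * Rdiag j) - (T * Rdiag j * A j j + T)
          = T * (Rdiag j * (lam • (1 : 𝔸) - A j j)) - T := by
        conv_rhs => rw [mul_sub, mul_smul_comm, mul_one, mul_sub, mul_smul_comm,
          ← mul_assoc]
        rw [sub_add_eq_sub_sub]
      rw [this, (hRdiag j).2, mul_one, sub_self]
end

section
/- Let n ≥ 1 and let λ₀, λ₁, …, λₙ be pairwise distinct complex numbers. For 1 ≤ r ≤ n define h_r(t) = ∑_{j=0}^{r} e^{λⱼ t} · ∏_{0 ≤ k ≤ r, k≠j} (λⱼ − λₖ)⁻¹ and h_0(t) = e^{λ₀ t}. Then for every t > 0, ∫_{0}^{t} h_{n−1}(s) · e^{λₙ (t−s)} ds = h_n(t). (Equivalently, for t > 0 the (n)-th divided difference of exp_{+,t} at λ₀, …, λₙ equals the (n+1)-fold convolution exp_{+,·}(λ₀) ∗ ⋯ ∗ exp_{+,·}(λₙ) evaluated at t.) -/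
open Finset Polynomial

lemma leadingCoeff_basisDivisor {x y : ℂ} :
    (Lagrange.basisDivisor x y).leadingCoeff = (x - y)⁻¹ := by
  rcases eq_or_ne x y with rfl | h
  · simp [Lagrange.basisDivisor_self]
  · rw [Lagrange.basisDivisor, leadingCoeff_mul, leadingCoeff_C,
      (monic_X_sub_C y).leadingCoeff, mul_one]

lemma key_sum (n : ℕ) (hn : 1 ≤ n) (lam : ℕ → ℂ)
    (hinj : Set.InjOn lam (Finset.range (n+1) : Finset ℕ)) :
    ∑ j ∈ Finset.range (n+1), ∏ k ∈ (Finset.range (n+1)).erase j, (lam j - lam k)⁻¹ = 0 := by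
  have h1 : (1 : ℂ[X]) = Lagrange.interpolate (Finset.range (n+1)) lam
      (fun i => (1 : ℂ[X]).eval (lam i)) := by
    apply Lagrange.eq_interpolate hinj
    simp only [Polynomial.degree_one, Finset.card_range]
    exact_mod_cast Nat.succ_pos n
  have h2 := congrArg (fun p : ℂ[X] => p.coeff n) h1
  simp only [Lagrange.interpolate_apply, Polynomial.eval_one, Polynomial.finset_sum_coeff,
    map_one, one_mul] at h2
  have hc1 : (1 : ℂ[X]).coeff n = 0 := by
    rw [Polynomial.coeff_one]
    simp [(by omega : n ≠ 0)]
    omega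
  rw [hc1] at h2
  have hcoeff : ∀ j ∈ Finset.range (n+1),
      (Lagrange.basis (Finset.range (n+1)) lam j).coeff n
        = ∏ k ∈ (Finset.range (n+1)).erase j, (lam j - lam k)⁻¹ := by
    intro j hj
    have hdeg : (Lagrange.basis (Finset.range (n+1)) lam j).degree = n := by
      have := Lagrange.degree_basis hinj hj
      simpa using this
    have hnd : (Lagrange.basis (Finset.range (n+1)) lam j).natDegree = n :=
      natDegree_eq_of_degree_eq_some hdeg
    calc (Lagrange.basis (Finset.range (n+1)) lam j).coeff n
        = (Lagrange.basis (Finset.range (n+1)) lam j).leadingCoeff := by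
          rw [Polynomial.leadingCoeff, hnd]
      _ = _ := by
          rw [Lagrange.basis, leadingCoeff_prod]
          exact Finset.prod_congr rfl fun k _ => leadingCoeff_basisDivisor
  rw [← Finset.sum_congr rfl hcoeff]
  exact h2.symm

/-- `hfun lam r t` is the `r`-th divided difference of `exp_{+,t}` at the points
`lam 0, …, lam r` (for pairwise distinct points and `t > 0`):
`∑_{j=0}^{r} e^{lam j · t} ∏_{k ≤ r, k ≠ j} (lam j − lam k)⁻¹`. -/
noncomputable def hfun (lam : ℕ → ℂ) (r : ℕ) (t : ℝ) : ℂ :=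
  ∑ j ∈ Finset.range (r + 1),
    Complex.exp (lam j * t) * ∏ k ∈ (Finset.range (r + 1)).erase j, (lam j - lam k)⁻¹

/-- For pairwise distinct `λ₀, …, λₙ` and `t > 0`, the convolution of the
`(n−1)`-th divided difference of `exp_{+,·}` at `λ₀, …, λ_{n−1}` with
`exp_{+,·}(λₙ)` equals the `n`-th divided difference at `λ₀, …, λₙ`; i.e. the
`n`-th divided difference of `exp_{+,t}` is the `(n+1)`-fold convolution
`exp_{+,·}(λ₀) ∗ ⋯ ∗ exp_{+,·}(λₙ)`. -/
theorem stmt_9 (n : ℕ) (hn : 1 ≤ n) (lam : ℕ → ℂ)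
    (hdist : ∀ j k : ℕ, j ≤ n → k ≤ n → j ≠ k → lam j ≠ lam k)
    (t : ℝ) (ht : 0 < t) :
    ∫ s in (0 : ℝ)..t, hfun lam (n - 1) s * Complex.exp (lam n * (t - s))
      = hfun lam n t := by
  obtain ⟨m, rfl⟩ : ∃ m, n = m + 1 := ⟨n - 1, (Nat.succ_pred_eq_of_pos hn).symm⟩
  set c : ℕ → ℂ := fun j => ∏ k ∈ (Finset.range (m+1)).erase j, (lam j - lam k)⁻¹ with hc
  set d : ℕ → ℂ := fun j => ∏ k ∈ (Finset.range (m+2)).erase j, (lam j - lam k)⁻¹ with hd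
  have hne : ∀ j ∈ Finset.range (m+1), lam j - lam (m+1) ≠ 0 := by
    intro j hj; rw [Finset.mem_range] at hj
    exact sub_ne_zero.mpr (hdist j (m+1) (by omega) le_rfl (by omega))
  have hdj : ∀ j ∈ Finset.range (m+1), d j = c j * (lam j - lam (m+1))⁻¹ := by
    intro j hj
    have hjm : j ≠ m + 1 := by rw [Finset.mem_range] at hj; omega
    have : (Finset.range (m+2)).erase j
        = insert (m+1) ((Finset.range (m+1)).erase j) := by
      rw [Finset.range_add_one, Finset.erase_insert_of_ne (Ne.symm hjm)]
    rw [hd]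
    simp only [this]
    rw [Finset.prod_insert (by simp), mul_comm]
  have hkey : ∑ j ∈ Finset.range (m+2), d j = 0 := by
    apply key_sum (m+1) (by omega)
    intro a ha b hb hab
    simp only [Finset.coe_range, Set.mem_Iio] at ha hb
    by_contra h
    exact hdist a b (by omega) (by omega) h hab
  have hsplit : hfun lam (m+1) t
      = ∑ j ∈ Finset.range (m+1), Complex.exp (lam j * t) * d j
        + Complex.exp (lam (m+1) * t) * d (m+1) := by
    rw [hfun, Finset.sum_range_succ]
  -- compute the integral
  have hintg : ∀ j ∈ Finset.range (m+1),
      (∫ s in (0:ℝ)..t, Complex.exp ((lam j - lam (m+1)) * s))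
        = (Complex.exp ((lam j - lam (m+1)) * t) - 1) / (lam j - lam (m+1)) := by
    intro j hj
    rw [integral_exp_mul_complex (hne j hj)]
    norm_num
  have hrw : ∀ s : ℝ, hfun lam (m + 1 - 1) s * Complex.exp (lam (m+1) * (t - s))
      = ∑ j ∈ Finset.range (m+1),
          (c j * Complex.exp (lam (m+1) * t)) * Complex.exp ((lam j - lam (m+1)) * s) := by
    intro s
    simp only [Nat.add_sub_cancel, hfun, Finset.sum_mul]
    refine Finset.sum_congr rfl fun j hj => ?_
    have e1 : Complex.exp (lam j * s) * Complex.exp (lam (m+1) * (t - s))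
        = Complex.exp (lam (m+1) * t) * Complex.exp ((lam j - lam (m+1)) * s) := by
      rw [← Complex.exp_add, ← Complex.exp_add]; congr 1; push_cast; ring
    calc Complex.exp (lam j * s) * (∏ k ∈ (Finset.range (m+1)).erase j, (lam j - lam k)⁻¹)
          * Complex.exp (lam (m+1) * (t - s))
        = (Complex.exp (lam j * s) * Complex.exp (lam (m+1) * (t - s))) * c j := by
          rw [hc]; ring
      _ = _ := by rw [e1]; ring
  calc ∫ s in (0:ℝ)..t, hfun lam (m + 1 - 1) s * Complex.exp (lam (m+1) * (t - s))
      = ∫ s in (0:ℝ)..t, ∑ j ∈ Finset.range (m+1),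
          (c j * Complex.exp (lam (m+1) * t)) * Complex.exp ((lam j - lam (m+1)) * s) := by
        simp only [hrw]
    _ = ∑ j ∈ Finset.range (m+1),
          ∫ s in (0:ℝ)..t, (c j * Complex.exp (lam (m+1) * t)) * Complex.exp ((lam j - lam (m+1)) * s) := by
        apply intervalIntegral.integral_finset_sum
        intro j hj
        apply Continuous.intervalIntegrable
        fun_prop
    _ = ∑ j ∈ Finset.range (m+1),
          (c j * Complex.exp (lam (m+1) * t)) *
            ((Complex.exp ((lam j - lam (m+1)) * t) - 1) / (lam j - lam (m+1))) := by
        refine Finset.sum_congr rfl fun j hj => ?_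
        rw [intervalIntegral.integral_const_mul, hintg j hj]
    _ = ∑ j ∈ Finset.range (m+1),
          (Complex.exp (lam j * t) - Complex.exp (lam (m+1) * t)) * (c j * (lam j - lam (m+1))⁻¹) := by
        refine Finset.sum_congr rfl fun j hj => ?_
        have h := hne j hj
        have e2 : Complex.exp (lam (m+1) * t) * Complex.exp ((lam j - lam (m+1)) * t)
            = Complex.exp (lam j * t) := by
          rw [← Complex.exp_add]; congr 1; ring
        field_simp
        rw [mul_comm (t:ℂ) (lam j - lam (m+1)), mul_comm (t:ℂ) (lam j)]
        linear_combination (c j) * e2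
    _ = ∑ j ∈ Finset.range (m+1), Complex.exp (lam j * t) * d j
        - Complex.exp (lam (m+1) * t) * ∑ j ∈ Finset.range (m+1), d j := by
        rw [Finset.mul_sum, ← Finset.sum_sub_distrib]
        refine Finset.sum_congr rfl fun j hj => ?_
        rw [hdj j hj]; ring
    _ = hfun lam (m+1) t := by
        have h2 : ∑ j ∈ Finset.range (m+1), d j = - d (m+1) := by
          have := hkey
          rw [Finset.sum_range_succ] at this
          linear_combination this
        rw [h2, hsplit]; ring
end

section
/- Let λ₁, λ₂ ∈ ℂ with Re λ₁ ≠ 0, Re λ₂ ≠ 0, and λ₁ ≠ λ₂, and let t ∈ ℝ, t ≠ 0. Then the integral ∫_{−∞}^{∞} g_s(λ₁) g_{t−s}(λ₂) ds converges absolutely and equals (g_t(λ₁) − g_t(λ₂))/(λ₁ − λ₂). -/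
open MeasureTheory

/-- The kernel of Green's function of the bounded solutions problem:
`g t λ = e^{λt}` if `t > 0` and `Re λ < 0`, `g t λ = −e^{λt}` if `t < 0` and
`Re λ > 0`, and `g t λ = 0` otherwise. -/
noncomputable def g (t : ℝ) (lam : ℂ) : ℂ :=
  if 0 < t ∧ lam.re < 0 then Complex.exp (lam * t)
  else if t < 0 ∧ 0 < lam.re then -Complex.exp (lam * t)
  else 0

open Set Filter Complex Topology

lemma aesm_cexp (c : ℂ) : AEStronglyMeasurable (fun s : ℝ => Complex.exp (c * s)) volume :=
  (Complex.continuous_exp.comp (continuous_const.mul Complex.continuous_ofReal)).aestronglyMeasurable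

lemma norm_cexp_mul (c : ℂ) (s : ℝ) : ‖Complex.exp (c * s)‖ = Real.exp (c.re * s) := by
  rw [Complex.norm_exp]
  simp [Complex.mul_re]

lemma cexp_intOn_Ioi {c : ℂ} (hc : c.re < 0) (a : ℝ) :
    IntegrableOn (fun s : ℝ => Complex.exp (c * s)) (Ioi a) := by
  have h : IntegrableOn (fun s : ℝ => Real.exp (-(-c.re) * s)) (Ioi a) :=
    exp_neg_integrableOn_Ioi a (by linarith)
  refine Integrable.mono' h (aesm_cexp c).restrict ?_
  filter_upwards with s
  rw [norm_cexp_mul]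
  simp

lemma cexp_intOn_Iic {c : ℂ} (hc : 0 < c.re) (b : ℝ) :
    IntegrableOn (fun s : ℝ => Complex.exp (c * s)) (Iic b) := by
  have h2 : IntegrableOn (fun s : ℝ => Complex.exp ((-c) * s)) (Ioi (-b)) :=
    cexp_intOn_Ioi (by simpa using hc) (-b)
  have h3 : IntegrableOn (fun s : ℝ => Complex.exp ((-c) * s)) (Ici (-b)) := by
    rwa [integrableOn_Ici_iff_integrableOn_Ioi]
  have h : IntegrableOn ((fun s : ℝ => Complex.exp (c * s)) ∘ (fun x : ℝ => -x))
      ((fun x : ℝ => -x) ⁻¹' (Iic b)) := by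
    have hs : ((fun x : ℝ => -x) ⁻¹' (Iic b)) = Ici (-b) := by ext x; simp [neg_le]
    rw [hs]
    refine h3.congr_fun ?_ measurableSet_Ici
    intro x _
    simp only [Function.comp]
    congr 1
    push_cast
    ring
  exact (MeasurePreserving.integrableOn_comp_preimage (Measure.measurePreserving_neg _)
    (Homeomorph.neg ℝ).measurableEmbedding).1 h

lemma cexp_tendsto_zero {c : ℂ} (hc : c.re < 0) :
    Tendsto (fun s : ℝ => Complex.exp (c * s) / c) atTop (𝓝 0) := by
  rw [tendsto_zero_iff_norm_tendsto_zero]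
  have h1 : Tendsto (fun s : ℝ => c.re * s) atTop atBot :=
    (tendsto_const_mul_atBot_of_neg hc).2 tendsto_id
  have h2 : Tendsto (fun s : ℝ => Real.exp (c.re * s) / ‖c‖) atTop (𝓝 0) := by
    simpa using (Real.tendsto_exp_atBot.comp h1).div_const ‖c‖
  refine h2.congr fun s => ?_
  rw [norm_div, norm_cexp_mul]

lemma integral_cexp_Ioi {c : ℂ} (hc : c.re < 0) (a : ℝ) :
    ∫ s in Ioi a, Complex.exp (c * s) = -Complex.exp (c * a) / c := by
  have hc0 : c ≠ 0 := fun h => by simp [h] at hc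
  have := integral_Ioi_of_hasDerivAt_of_tendsto' (a := a)
    (f := fun s : ℝ => Complex.exp (c * s) / c) (f' := fun s : ℝ => Complex.exp (c * s))
    (m := 0) (fun x _ => ?_) (cexp_intOn_Ioi hc a) (cexp_tendsto_zero hc)
  · rw [this]; field_simp; ring
  · have hd : HasDerivAt (fun s : ℝ => Complex.exp (c * s)) (Complex.exp (c * x) * c) x := by
      have := ((Complex.hasDerivAt_exp (c * x)).scomp x
        ((hasDerivAt_id (x : ℝ)).ofReal_comp.const_mul c))
      simpa [mul_comm, Function.comp_def] using this
    simpa [mul_div_cancel_right₀ _ hc0] using hd.div_const c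

lemma integral_cexp_Iic {c : ℂ} (hc : 0 < c.re) (b : ℝ) :
    ∫ s in Iic b, Complex.exp (c * s) = Complex.exp (c * b) / c := by
  have h := integral_comp_neg_Ioi (-b) (fun s : ℝ => Complex.exp (c * s))
  rw [neg_neg] at h
  rw [← h]
  have h2 : ∀ x : ℝ, Complex.exp (c * ((-x : ℝ) : ℂ)) = Complex.exp ((-c) * x) := by
    intro s; congr 1; push_cast; ring
  calc (∫ x : ℝ in Ioi (-b), Complex.exp (c * ((-x : ℝ) : ℂ)))
      = ∫ x : ℝ in Ioi (-b), Complex.exp ((-c) * x) := by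
        exact setIntegral_congr_fun measurableSet_Ioi fun x _ => h2 x
    _ = -Complex.exp ((-c) * (-b : ℝ)) / (-c) := integral_cexp_Ioi (by simpa using hc) (-b)
    _ = Complex.exp (c * b) / c := by
        rw [neg_div_neg_eq]
        congr 2
        push_cast
        ring

lemma g_of_neg {lam : ℂ} (h : lam.re < 0) (s : ℝ) :
    g s lam = if 0 < s then Complex.exp (lam * s) else 0 := by
  simp [g, h, h.not_gt]

lemma g_of_pos {lam : ℂ} (h : 0 < lam.re) (s : ℝ) :
    g s lam = if s < 0 then -Complex.exp (lam * s) else 0 := by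
  simp [g, h, h.not_gt]

/-- For `Re λ₁ ≠ 0`, `Re λ₂ ≠ 0`, `λ₁ ≠ λ₂` and `t ≠ 0`, the convolution
`∫_{−∞}^{∞} g_s(λ₁) g_{t−s}(λ₂) ds` converges absolutely and equals the first
divided difference `(g_t(λ₁) − g_t(λ₂))/(λ₁ − λ₂)`. -/
theorem stmt_11 (lam1 lam2 : ℂ) (h1 : lam1.re ≠ 0) (h2 : lam2.re ≠ 0)
    (hne : lam1 ≠ lam2) (t : ℝ) (ht : t ≠ 0) :
    Integrable (fun s : ℝ => g s lam1 * g (t - s) lam2) ∧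
    ∫ s : ℝ, g s lam1 * g (t - s) lam2 = (g t lam1 - g t lam2) / (lam1 - lam2) := by
  have hd : lam1 - lam2 ≠ 0 := sub_ne_zero.mpr hne
  have e12 : Complex.exp (lam2 * t) * Complex.exp ((lam1 - lam2) * t) = Complex.exp (lam1 * t) := by
    rw [← Complex.exp_add]; congr 1; ring
  have hcont : Continuous fun s : ℝ => Complex.exp (lam2 * t) * Complex.exp ((lam1 - lam2) * s) :=
    continuous_const.mul (Complex.continuous_exp.comp
      (continuous_const.mul Complex.continuous_ofReal))
  rcases h1.lt_or_gt with hr1 | hr1 <;> rcases h2.lt_or_gt with hr2 | hr2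
  · -- both negative : support Ioo 0 t
    have key : (fun s : ℝ => g s lam1 * g (t - s) lam2)
        = (Ioo 0 t).indicator
          (fun s : ℝ => Complex.exp (lam2 * t) * Complex.exp ((lam1 - lam2) * s)) := by
      funext s
      rw [g_of_neg hr1, g_of_neg hr2, indicator_apply]
      by_cases hs1 : 0 < s
      · by_cases hs2 : s < t
        · rw [if_pos hs1, if_pos (by linarith : (0:ℝ) < t - s),
            if_pos (mem_Ioo.mpr ⟨hs1, hs2⟩), ← Complex.exp_add, ← Complex.exp_add]
          congr 1; push_cast; ring
        · rw [if_neg (by simp at hs2 ⊢; linarith : ¬ (0:ℝ) < t - s), mul_zero,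
            if_neg (by simp [mem_Ioo, hs2])]
      · rw [if_neg hs1, zero_mul, if_neg (by simp [mem_Ioo, hs1])]
    rw [key]
    constructor
    · rw [integrable_indicator_iff measurableSet_Ioo]
      exact (hcont.integrableOn_Ioc).mono_set Ioo_subset_Ioc_self
    · rw [integral_indicator measurableSet_Ioo]
      rcases ht.lt_or_gt with htneg | htpos
      · rw [Ioo_eq_empty (by linarith), Measure.restrict_empty, integral_zero_measure,
          g_of_neg hr1, g_of_neg hr2, if_neg (by linarith), if_neg (by linarith)]
        simp
      · rw [← integral_Ioc_eq_integral_Ioo, ← intervalIntegral.integral_of_le htpos.le,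
          intervalIntegral.integral_const_mul, integral_exp_mul_complex hd,
          g_of_neg hr1, g_of_neg hr2, if_pos htpos, if_pos htpos]
        simp only [Complex.ofReal_zero, mul_zero, Complex.exp_zero]
        rw [mul_div_assoc', mul_sub, mul_one, e12]
  · -- lam1 neg, lam2 pos : support Ioi (max 0 t)
    have key : (fun s : ℝ => g s lam1 * g (t - s) lam2)
        = (Ioi (max 0 t)).indicator
          (fun s : ℝ => -(Complex.exp (lam2 * t) * Complex.exp ((lam1 - lam2) * s))) := by
      funext s
      rw [g_of_neg hr1, g_of_pos hr2, indicator_apply]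
      by_cases hs1 : 0 < s
      · by_cases hs2 : t < s
        · rw [if_pos hs1, if_pos (by linarith : t - s < 0),
            if_pos (mem_Ioi.mpr (max_lt hs1 hs2)), mul_neg, ← Complex.exp_add,
            ← Complex.exp_add]
          congr 2; push_cast; ring
        · rw [if_neg (by simp at hs2 ⊢; linarith : ¬ t - s < 0), mul_zero,
            if_neg (by simp [mem_Ioi, max_lt_iff, hs2])]
      · rw [if_neg hs1, zero_mul, if_neg (by simp [mem_Ioi, max_lt_iff, hs1])]
    have hcre : (lam1 - lam2).re < 0 := by simp only [Complex.sub_re]; linarith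
    rw [key]
    constructor
    · rw [integrable_indicator_iff measurableSet_Ioi]
      exact (((cexp_intOn_Ioi hcre (max 0 t)).const_mul (Complex.exp (lam2 * t))).neg)
    · rw [integral_indicator measurableSet_Ioi, integral_neg, integral_const_mul,
        integral_cexp_Ioi hcre (max 0 t)]
      rcases ht.lt_or_gt with htneg | htpos
      · rw [max_eq_left htneg.le, g_of_neg hr1, g_of_pos hr2, if_neg (by linarith),
          if_pos htneg]
        simp only [Complex.ofReal_zero, mul_zero, Complex.exp_zero]
        field_simp
        ring
      · rw [max_eq_right htpos.le, g_of_neg hr1, g_of_pos hr2, if_pos htpos,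
          if_neg (by linarith)]
        rw [neg_div, mul_neg, neg_neg, mul_div_assoc', e12, sub_zero]
  · -- lam1 pos, lam2 neg : support Iio (min 0 t)
    have key : (fun s : ℝ => g s lam1 * g (t - s) lam2)
        = (Iio (min 0 t)).indicator
          (fun s : ℝ => -(Complex.exp (lam2 * t) * Complex.exp ((lam1 - lam2) * s))) := by
      funext s
      rw [g_of_pos hr1, g_of_neg hr2, indicator_apply]
      by_cases hs1 : s < 0
      · by_cases hs2 : s < t
        · rw [if_pos hs1, if_pos (by linarith : (0:ℝ) < t - s),
            if_pos (mem_Iio.mpr (lt_min hs1 hs2)), neg_mul, ← Complex.exp_add,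
            ← Complex.exp_add]
          congr 2; push_cast; ring
        · rw [if_neg (by simp at hs2 ⊢; linarith : ¬ (0:ℝ) < t - s), mul_zero,
            if_neg (by simp [mem_Iio, lt_min_iff, hs2])]
      · rw [if_neg hs1, zero_mul, if_neg (by simp [mem_Iio, lt_min_iff, hs1])]
    have hcre : 0 < (lam1 - lam2).re := by simp only [Complex.sub_re]; linarith
    rw [key]
    constructor
    · rw [integrable_indicator_iff measurableSet_Iio]
      exact ((((cexp_intOn_Iic hcre (min 0 t)).mono_set
        Iio_subset_Iic_self).const_mul (Complex.exp (lam2 * t))).neg)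
    · rw [integral_indicator measurableSet_Iio, ← integral_Iic_eq_integral_Iio,
        integral_neg, integral_const_mul, integral_cexp_Iic hcre (min 0 t)]
      rcases ht.lt_or_gt with htneg | htpos
      · rw [min_eq_right htneg.le, g_of_pos hr1, g_of_neg hr2, if_pos htneg,
          if_neg (by linarith)]
        rw [mul_div_assoc', e12, sub_zero, neg_div]
      · rw [min_eq_left htpos.le, g_of_pos hr1, g_of_neg hr2, if_neg (by linarith),
          if_pos htpos]
        simp only [Complex.ofReal_zero, mul_zero, Complex.exp_zero, mul_one]
        rw [zero_sub, neg_div, mul_one_div]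
  · -- both positive : support Ioo t 0
    have key : (fun s : ℝ => g s lam1 * g (t - s) lam2)
        = (Ioo t 0).indicator
          (fun s : ℝ => Complex.exp (lam2 * t) * Complex.exp ((lam1 - lam2) * s)) := by
      funext s
      rw [g_of_pos hr1, g_of_pos hr2, indicator_apply]
      by_cases hs1 : s < 0
      · by_cases hs2 : t < s
        · rw [if_pos hs1, if_pos (by linarith : t - s < 0),
            if_pos (mem_Ioo.mpr ⟨hs2, hs1⟩), neg_mul_neg, ← Complex.exp_add,
            ← Complex.exp_add]
          congr 1; push_cast; ring
        · rw [if_neg (by simp at hs2 ⊢; linarith : ¬ t - s < 0), mul_zero,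
            if_neg (by simp [mem_Ioo, hs2])]
      · rw [if_neg hs1, zero_mul, if_neg (by simp [mem_Ioo] ; intro _; simpa using hs1)]
    rw [key]
    constructor
    · rw [integrable_indicator_iff measurableSet_Ioo]
      exact (hcont.integrableOn_Ioc).mono_set Ioo_subset_Ioc_self
    · rw [integral_indicator measurableSet_Ioo]
      rcases ht.lt_or_gt with htneg | htpos
      · rw [← integral_Ioc_eq_integral_Ioo, ← intervalIntegral.integral_of_le htneg.le,
          intervalIntegral.integral_const_mul, integral_exp_mul_complex hd,
          g_of_pos hr1, g_of_pos hr2, if_pos htneg, if_pos htneg]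
        simp only [Complex.ofReal_zero, mul_zero, Complex.exp_zero]
        rw [mul_div_assoc', mul_sub, mul_one, e12]
        rw [div_eq_div_iff hd hd]
        ring
      · rw [Ioo_eq_empty (by linarith), Measure.restrict_empty, integral_zero_measure,
          g_of_pos hr1, g_of_pos hr2, if_neg (by linarith), if_neg (by linarith)]
        simp
end

section
/- Let λ ∈ ℂ with Re λ ≠ 0 and let f : ℝ → ℂ be continuous and bounded. Then the function x(t) = ∫_{−∞}^{∞} g_s(λ) f(t−s) ds is well defined (the integral converges absolutely for each t), is bounded on ℝ, is differentiable at every t ∈ ℝ with x′(t) = λ x(t) + f(t); moreover, x is the unique bounded solution: if y : ℝ → ℂ is bounded and differentiable with y′(t) = λ y(t) + f(t) for all t, then y = x. -/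
open MeasureTheory

open Set

lemma gneg (lam : ℂ) (h : lam.re < 0) (s : ℝ) :
    g s lam = Set.indicator (Ioi (0:ℝ)) (fun u => Complex.exp (lam * u)) s := by
  simp only [g, Set.indicator, mem_Ioi]
  rcases lt_trichotomy 0 s with hs | hs | hs
  · simp [hs, h]
  · simp [← hs]
  · simp [hs, not_lt_of_gt hs, h.not_gt, le_of_lt h]

lemma g_int (lam : ℂ) (h : lam.re < 0) : Integrable (fun s => g s lam) := by
  have : Integrable (Set.indicator (Ioi (0:ℝ)) (fun u => Complex.exp (lam * u))) := by
    rw [integrable_indicator_iff measurableSet_Ioi]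
    apply Integrable.mono' (g := fun u : ℝ => Real.exp ((lam.re) * u))
    · have := exp_neg_integrableOn_Ioi 0 (b := -lam.re) (by linarith)
      simpa [IntegrableOn] using this
    · exact ((Complex.continuous_exp.comp
        (continuous_const.mul Complex.continuous_ofReal)).aestronglyMeasurable).restrict
    · filter_upwards with u
      simp [Complex.norm_exp, Complex.mul_re]
  exact this.congr (by filter_upwards with s; exact (gneg lam h s).symm)

lemma core (lam : ℂ) (h : lam.re < 0) (f : ℝ → ℂ) (hf : Continuous f)
    (C : ℝ) (hfb : ∀ t : ℝ, ‖f t‖ ≤ C) :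
    (∀ t : ℝ, Integrable (fun s : ℝ => g s lam * f (t - s))) ∧
    (∀ t : ℝ, ‖∫ s : ℝ, g s lam * f (t - s)‖ ≤ (∫ s : ℝ, ‖g s lam‖) * C) ∧
    (∀ t : ℝ, HasDerivAt (fun t : ℝ => ∫ s : ℝ, g s lam * f (t - s))
      (lam * (∫ s : ℝ, g s lam * f (t - s)) + f t) t) := by
  set X : ℝ → ℂ := fun t => ∫ s : ℝ, g s lam * f (t - s) with hX
  have hg := g_int lam h
  -- integrability
  have hint : ∀ t : ℝ, Integrable (fun s : ℝ => g s lam * f (t - s)) := by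
    intro t
    apply Integrable.mono' (g := fun s => ‖g s lam‖ * C) (hg.norm.mul_const C)
    · exact hg.aestronglyMeasurable.mul
        ((hf.comp (continuous_const.sub continuous_id)).aestronglyMeasurable)
    · filter_upwards with s
      rw [norm_mul]
      exact mul_le_mul_of_nonneg_left (hfb _) (norm_nonneg _)
  refine ⟨hint, ?_, ?_⟩
  · intro t
    calc ‖X t‖ ≤ ∫ s : ℝ, ‖g s lam * f (t - s)‖ := norm_integral_le_integral_norm _
    _ ≤ ∫ s : ℝ, ‖g s lam‖ * C := by
        apply integral_mono (hint t).norm (hg.norm.mul_const C)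
        intro s
        show ‖g s lam * f (t - s)‖ ≤ ‖g s lam‖ * C
        rw [norm_mul]
        exact mul_le_mul_of_nonneg_left (hfb _) (norm_nonneg _)
    _ = (∫ s : ℝ, ‖g s lam‖) * C := integral_mul_const _ _
  -- derivative
  -- key pointwise identity
  have key : ∀ t u : ℝ, g (t - u) lam * f u =
      Complex.exp (lam * t) •
        Set.indicator (Iio t) (fun u : ℝ => Complex.exp (-lam * u) * f u) u := by
    intro t u
    simp only [Set.indicator, mem_Iio, g, smul_eq_mul]
    by_cases hu : u < t
    · have : (0:ℝ) < t - u := by linarith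
      rw [if_pos ⟨this, h⟩, if_pos hu]
      rw [← mul_assoc, ← Complex.exp_add]
      push_cast
      ring_nf
    · have h1 : ¬((0:ℝ) < t - u ∧ lam.re < 0) := by rintro ⟨hh, -⟩; exact hu (by linarith)
      have h2 : ¬(t - u < 0 ∧ (0:ℝ) < lam.re) := by rintro ⟨-, hh⟩; linarith
      rw [if_neg h1, if_neg h2, if_neg hu]; ring
  -- integrability of the kernel for the antiderivative
  have hcont : Continuous (fun u : ℝ => Complex.exp (-lam * u) * f u) :=
    (Complex.continuous_exp.comp (continuous_const.mul Complex.continuous_ofReal)).mul hf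
  have hFi : ∀ t : ℝ, IntegrableOn (fun u : ℝ => Complex.exp (-lam * u) * f u) (Iic t) := by
    intro t
    have h1 : Integrable (fun u : ℝ => g (t - u) lam * f u) := by
      have := (hint t).comp_sub_left t
      apply this.congr
      filter_upwards with u
      simp
    have h2 : Integrable (fun u : ℝ => Complex.exp (lam * t) •
        Set.indicator (Iio t) (fun u : ℝ => Complex.exp (-lam * u) * f u) u) :=
      h1.congr (by filter_upwards with u; exact key t u)
    have h3 : Integrable (Set.indicator (Iio t) (fun u : ℝ => Complex.exp (-lam * u) * f u)) := by
      have h4 := h2.smul (Complex.exp (-(lam * t)))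
      apply h4.congr
      filter_upwards with u
      simp only [Pi.smul_apply]
      rw [smul_smul, ← Complex.exp_add, neg_add_cancel, Complex.exp_zero, one_smul]
    have h5 : IntegrableOn (fun u : ℝ => Complex.exp (-lam * u) * f u) (Iio t) :=
      (integrable_indicator_iff measurableSet_Iio).mp h3
    exact h5.congr_set_ae (Iio_ae_eq_Iic (μ := volume) (a := t)).symm
  set F : ℝ → ℂ := fun t => ∫ u in Iic t, Complex.exp (-lam * u) * f u with hF
  -- X t = exp (lam t) * F t
  have Xeq : ∀ t : ℝ, X t = Complex.exp (lam * t) * F t := by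
    intro t
    have s1 : X t = ∫ u : ℝ, g (t - u) lam * f u := by
      have s0 := integral_sub_left_eq_self (fun u : ℝ => g u lam * f (t - u)) volume t
      simp only [sub_sub_cancel] at s0
      exact s0.symm
    rw [s1]
    calc ∫ u : ℝ, g (t - u) lam * f u
        = ∫ u : ℝ, Complex.exp (lam * t) •
            Set.indicator (Iio t) (fun u : ℝ => Complex.exp (-lam * u) * f u) u := by
          exact integral_congr_ae (by filter_upwards with u; exact key t u)
      _ = Complex.exp (lam * t) • ∫ u : ℝ,
            Set.indicator (Iio t) (fun u : ℝ => Complex.exp (-lam * u) * f u) u :=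
          integral_smul _ _
      _ = Complex.exp (lam * t) * ∫ u in Iio t, Complex.exp (-lam * u) * f u := by
          rw [integral_indicator measurableSet_Iio, smul_eq_mul]
      _ = Complex.exp (lam * t) * F t := by
          rw [hF, setIntegral_congr_set (Iio_ae_eq_Iic (μ := volume) (a := t))]
  -- derivative of F
  have hF' : ∀ t : ℝ, HasDerivAt F (Complex.exp (-lam * t) * f t) t := by
    intro t
    have hrep : F = fun t : ℝ => F 0 + ∫ u in (0:ℝ)..t, Complex.exp (-lam * u) * f u := by
      funext t
      rw [← intervalIntegral.integral_Iic_sub_Iic (hFi 0) (hFi t)]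
      simp [hF]
    rw [hrep]
    exact (intervalIntegral.integral_hasDerivAt_right (hcont.intervalIntegrable 0 t)
      hcont.aestronglyMeasurable.stronglyMeasurableAtFilter hcont.continuousAt).const_add (F 0)
  -- conclude
  intro t
  have hE : HasDerivAt (fun t : ℝ => Complex.exp (lam * t)) (Complex.exp (lam * t) * lam) t := by
    have h1 : HasDerivAt (fun t : ℝ => lam * (t : ℂ)) lam t := by
      simpa using ((hasDerivAt_id t).ofReal_comp.const_mul lam)
    exact h1.cexp
  have hprod := hE.mul (hF' t)
  have hXfun : X = fun t : ℝ => Complex.exp (lam * t) * F t := funext Xeq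
  rw [show lam * X t + f t
      = Complex.exp (lam * t) * lam * F t + Complex.exp (lam * t) * (Complex.exp (-lam * t) * f t) by
    rw [Xeq t, ← mul_assoc (Complex.exp (lam * t)), ← Complex.exp_add,
      show lam * (t:ℂ) + -lam * t = 0 by ring, Complex.exp_zero]
    ring]
  rw [hXfun]
  exact hprod


lemma gsym (lam : ℂ) (hl : 0 < lam.re) (s : ℝ) : g (-s) (-lam) = -g s lam := by
  have hc : (-lam) * ((-s : ℝ) : ℂ) = lam * s := by push_cast; ring
  simp only [g, Complex.neg_re, hc]
  rcases lt_trichotomy s 0 with hs | hs | hs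
  · rw [if_pos ⟨by linarith, by linarith⟩, if_neg (by rintro ⟨h1, -⟩; linarith),
      if_pos ⟨hs, hl⟩, neg_neg]
  · subst hs; norm_num
  · rw [if_neg (by rintro ⟨h1, -⟩; linarith), if_neg (by rintro ⟨-, h2⟩; linarith),
      if_neg (by rintro ⟨-, h2⟩; linarith), if_neg (by rintro ⟨h1, -⟩; linarith), neg_zero]

/-- For `Re λ ≠ 0` and a bounded continuous `f`, the function
`x(t) = ∫_{−∞}^{∞} g_s(λ) f(t−s) ds` is well defined (the integral converges
absolutely), bounded, differentiable with `x′(t) = λ x(t) + f(t)`, and is the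
unique bounded solution of this equation. -/
theorem stmt_16 (lam : ℂ) (hre : lam.re ≠ 0)
    (f : ℝ → ℂ) (hf : Continuous f) (hfb : ∃ C : ℝ, ∀ t : ℝ, ‖f t‖ ≤ C)
    (x : ℝ → ℂ)
    (hx : ∀ t : ℝ, x t = ∫ s : ℝ, g s lam * f (t - s)) :
    (∀ t : ℝ, Integrable (fun s : ℝ => g s lam * f (t - s))) ∧
    (∃ C : ℝ, ∀ t : ℝ, ‖x t‖ ≤ C) ∧
    (∀ t : ℝ, HasDerivAt x (lam * x t + f t) t) ∧
    (∀ y : ℝ → ℂ, (∃ C : ℝ, ∀ t : ℝ, ‖y t‖ ≤ C) →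
      (∀ t : ℝ, HasDerivAt y (lam * y t + f t) t) → y = x) := by
  obtain ⟨C, hC⟩ := hfb
  have main : (∀ t : ℝ, Integrable (fun s : ℝ => g s lam * f (t - s))) ∧
      (∃ C : ℝ, ∀ t : ℝ, ‖x t‖ ≤ C) ∧
      (∀ t : ℝ, HasDerivAt x (lam * x t + f t) t) := by
    rcases lt_or_gt_of_ne hre with hneg | hpos
    · obtain ⟨H1, H2, H3⟩ := core lam hneg f hf C hC
      refine ⟨H1, ⟨(∫ s : ℝ, ‖g s lam‖) * C, fun t => by rw [hx t]; exact H2 t⟩, fun t => ?_⟩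
      have h := H3 t
      rw [← hx t] at h
      exact h.congr_of_eventuallyEq (Filter.Eventually.of_forall hx)
    · set mu : ℂ := -lam with hmu
      have hmure : mu.re < 0 := by simp [hmu]; exact hpos
      set ft : ℝ → ℂ := fun t => f (-t) with hft
      have hftc : Continuous ft := hf.comp continuous_neg
      have hftb : ∀ t : ℝ, ‖ft t‖ ≤ C := fun t => hC (-t)
      obtain ⟨H1, H2, H3⟩ := core mu hmure ft hftc C hftb
      set X : ℝ → ℂ := fun t => ∫ s : ℝ, g s mu * ft (t - s) with hXdef
      -- pointwise identity between the integrands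
      have key : ∀ t s : ℝ, g s lam * f (t - s) = -(g (-s) mu * ft (-t - -s)) := by
        intro t s
        have h1 : g (-s) mu = -g s lam := by
          rw [hmu]; exact gsym lam hpos s
        rw [h1, hft]
        simp only [neg_mul, neg_neg]
        congr 2
        ring
      have hint : ∀ t : ℝ, Integrable (fun s : ℝ => g s lam * f (t - s)) := by
        intro t
        have h1 : Integrable (fun s : ℝ => g s mu * ft (-t - s)) := H1 (-t)
        have h2 := (h1.comp_neg).neg
        apply h2.congr
        filter_upwards with s
        exact (key t s).symm
      have xeq : ∀ t : ℝ, x t = -X (-t) := by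
        intro t
        rw [hx t]
        calc (∫ s : ℝ, g s lam * f (t - s))
            = ∫ s : ℝ, -(g (-s) mu * ft (-t - -s)) := integral_congr_ae
              (Filter.Eventually.of_forall fun s => key t s)
          _ = -∫ s : ℝ, g (-s) mu * ft (-t - -s) := integral_neg _
          _ = -∫ s : ℝ, g s mu * ft (-t - s) :=
              congrArg Neg.neg (integral_neg_eq_self (fun s : ℝ => g s mu * ft (-t - s)) volume)
          _ = -X (-t) := rfl
      refine ⟨hint, ⟨(∫ s : ℝ, ‖g s mu‖) * C, fun t => by rw [xeq t, norm_neg]; exact H2 (-t)⟩,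
        fun t => ?_⟩
      have hval : mu * X (-t) + ft (-t) = lam * x t + f t := by
        rw [hmu, hft, xeq t]
        ring_nf
      have hd2 : HasDerivAt (fun s : ℝ => -X (-s)) (lam * x t + f t) t := by
        rw [← hval]
        have h1 := (H3 (-t)).scomp t (hasDerivAt_neg (𝕜 := ℝ) t)
        have h2 := h1.neg
        convert h2 using 1
        · rfl
        · rfl
        simp only [neg_smul, one_smul, neg_neg, hXdef]
      exact hd2.congr_of_eventuallyEq (Filter.Eventually.of_forall xeq)
  obtain ⟨H1, ⟨Cx, hCx⟩, H3⟩ := main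
  refine ⟨H1, ⟨Cx, hCx⟩, H3, ?_⟩
  -- uniqueness
  rintro y ⟨Cy, hCy⟩ hy'
  set z : ℝ → ℂ := fun t => y t - x t with hz
  have hz' : ∀ t : ℝ, HasDerivAt z (lam * z t) t := by
    intro t
    have := (hy' t).sub (H3 t)
    convert this using 1
    · rfl
    · rfl
    rw [hz]; ring
  have hE : ∀ t : ℝ, HasDerivAt (fun t : ℝ => Complex.exp (-lam * t))
      (Complex.exp (-lam * t) * -lam) t := by
    intro t
    have h1 : HasDerivAt (fun t : ℝ => -lam * (t : ℂ)) (-lam) t := by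
      simpa using ((hasDerivAt_id t).ofReal_comp.const_mul (-lam))
    exact h1.cexp
  set w : ℝ → ℂ := fun t => Complex.exp (-lam * t) * z t with hw
  have hw' : ∀ t : ℝ, HasDerivAt w 0 t := by
    intro t
    have := (hE t).mul (hz' t)
    convert this using 1
    · rfl
    · rfl
    ring
  have hconst : ∀ t : ℝ, w t = w 0 :=
    fun t => is_const_of_deriv_eq_zero (fun s => (hw' s).differentiableAt)
      (fun s => (hw' s).deriv) t 0
  have hw0 : w 0 = z 0 := by simp [hw]
  have zeq : ∀ t : ℝ, z t = Complex.exp (lam * t) * z 0 := by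
    intro t
    have h1 := hconst t
    rw [hw0, hw] at h1
    have h2 := congrArg (fun v => Complex.exp (lam * t) * v) h1
    simpa [← mul_assoc, ← Complex.exp_add, show lam * (t:ℂ) + -lam * t = 0 by ring,
      Complex.exp_zero] using h2
  have hzb : ∀ t : ℝ, ‖z t‖ ≤ Cy + Cx := by
    intro t
    calc ‖z t‖ ≤ ‖y t‖ + ‖x t‖ := norm_sub_le _ _
      _ ≤ Cy + Cx := add_le_add (hCy t) (hCx t)
  have hz0 : z 0 = 0 := by
    by_contra h0
    have hpos : 0 < ‖z 0‖ := norm_pos_iff.mpr h0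
    have hbd : ∀ t : ℝ, Real.exp (lam.re * t) ≤ (Cy + Cx) / ‖z 0‖ := by
      intro t
      rw [le_div_iff₀ hpos]
      have := hzb t
      rw [zeq t, norm_mul, Complex.norm_exp] at this
      simpa [Complex.mul_re] using this
    set r : ℝ := (Cy + Cx) / ‖z 0‖ with hr
    have hCC : 0 ≤ Cy + Cx := le_trans (norm_nonneg (z 0)) (hzb 0)
    have hr0 : 0 ≤ r := div_nonneg hCC hpos.le
    have h1 := hbd (Real.log (r + 1) / lam.re)
    rw [show lam.re * (Real.log (r + 1) / lam.re) = Real.log (r + 1) by field_simp,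
      Real.exp_log (by linarith)] at h1
    linarith
  refine funext fun t => ?_
  have := zeq t
  rw [hz0, mul_zero, hz] at this
  exact sub_eq_zero.mp this
end

section
/- Let 𝔸 be a complex unital Banach algebra and a, b, c ∈ 𝔸. Let A be the 2×2 matrix over 𝔸 given by A = [[a, 0], [b, c]] (lower triangular). Then for every t > 0 the matrix exponential exp(t·A) equals [[e^{ta}, 0], [E, e^{tc}]] where E = ∫_{0}^{t} e^{sc} · b · e^{(t−s)a} ds; that is, (exp(tA))_{11} = e^{ta}, (exp(tA))_{12} = 0, (exp(tA))_{22} = e^{tc}, and (exp(tA))_{21} = ∫_{0}^{t} e^{sc} b e^{(t−s)a} ds. -/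
open MeasureTheory

section helper17
open NormedSpace

section aux
attribute [local instance] Matrix.linftyOpNormedRing Matrix.linftyOpNormedAlgebra

variable {𝔸 : Type*} [NormedRing 𝔸] [NormedAlgebra ℂ 𝔸] [CompleteSpace 𝔸]

/-- entry-insertion as a continuous linear map -/
noncomputable def put17 (i j : Fin 2) : 𝔸 →L[ℝ] Matrix (Fin 2) (Fin 2) 𝔸 where
  toFun x := Matrix.single i j x
  map_add' x y := by ext i' j'; simp [Matrix.single]; split <;> simp
  map_smul' r x := by ext i' j'; simp [Matrix.single]
  cont := by
    apply continuous_pi; intro i'; apply continuous_pi; intro j'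
    simp only [Matrix.single, Matrix.of_apply]
    split
    · exact continuous_id
    · exact continuous_const

@[simp] lemma put17_apply (i j : Fin 2) (x : 𝔸) :
    put17 i j x = Matrix.single i j x := rfl
end aux

section aux2
attribute [local instance] Matrix.linftyOpNormedRing Matrix.linftyOpNormedAlgebra

set_option maxHeartbeats 1000000 in
theorem key17 {𝔸 : Type*} [NormedRing 𝔸] [NormedAlgebra ℂ 𝔸] [CompleteSpace 𝔸]
    (a b c : 𝔸) (t : ℝ) :
    NormedSpace.exp (t • (!![a, 0; b, c] : Matrix (Fin 2) (Fin 2) 𝔸)) =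
      !![NormedSpace.exp (t • a), 0;
         (∫ u in (0:ℝ)..t, NormedSpace.exp (u • c) * b * NormedSpace.exp (-(u • a))) *
           NormedSpace.exp (t • a),
         NormedSpace.exp (t • c)] := by
  letI : NormedAlgebra ℚ 𝔸 := NormedAlgebra.restrictScalars ℚ ℂ 𝔸
  set A : Matrix (Fin 2) (Fin 2) 𝔸 := !![a, 0; b, c] with hA
  set g : ℝ → 𝔸 := fun u => exp (u • c) * b * exp (-(u • a)) with hgdef
  have hg : Continuous g := by
    apply Continuous.mul
    · exact ((exp_continuous).comp ((continuous_id).smul continuous_const)).mul continuous_const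
    · exact (exp_continuous).comp (((continuous_id).smul continuous_const).neg)
  set G : ℝ → 𝔸 := fun s => ∫ u in (0:ℝ)..s, g u with hGdef
  have hG : ∀ s : ℝ, HasDerivAt G (g s) s := by
    intro s
    exact intervalIntegral.integral_hasDerivAt_right (hg.intervalIntegrable 0 s)
      (hg.stronglyMeasurableAtFilter _ _) hg.continuousAt
  set F : ℝ → Matrix (Fin 2) (Fin 2) 𝔸 := fun s =>
    put17 0 0 (exp (s • a)) + put17 1 0 (G s * exp (s • a)) + put17 1 1 (exp (s • c))
    with hFdef
  have hFform : ∀ s : ℝ, F s = !![exp (s • a), 0; G s * exp (s • a), exp (s • c)] := by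
    intro s
    ext i j
    fin_cases i <;> fin_cases j <;>
      simp [hFdef, Matrix.single]
  have hea : ∀ s : ℝ, HasDerivAt (fun s : ℝ => exp (s • a)) (exp (s • a) * a) s :=
    fun s => hasDerivAt_exp_smul_const a s
  have hec : ∀ s : ℝ, HasDerivAt (fun s : ℝ => exp (s • c)) (exp (s • c) * c) s :=
    fun s => hasDerivAt_exp_smul_const c s
  have hinv : ∀ s : ℝ, exp (-(s • a)) * exp (s • a) = 1 := by
    intro s
    rw [← exp_add_of_commute (Commute.neg_left (Commute.refl _)), neg_add_cancel, exp_zero]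
  have hF : ∀ s : ℝ, HasDerivAt F (F s * A) s := by
    intro s
    have h1 := (put17 (𝔸 := 𝔸) 0 0).hasFDerivAt.comp_hasDerivAt s (hea s)
    have h2 := (put17 (𝔸 := 𝔸) 1 0).hasFDerivAt.comp_hasDerivAt s ((hG s).mul (hea s))
    have h3 := (put17 (𝔸 := 𝔸) 1 1).hasFDerivAt.comp_hasDerivAt s (hec s)
    simp only [Function.comp_def] at h1 h2 h3
    have h4 := (h1.add h2).add h3
    refine h4.congr_deriv ?_
    symm
    have hgs : g s * exp (s • a) = exp (s • c) * b := by
      rw [hgdef]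
      simp only [mul_assoc, hinv s, mul_one]
    erw [put17_apply, put17_apply, put17_apply]
    rw [hFform s]
    ext i j
    fin_cases i <;> fin_cases j <;>
      simp [Matrix.mul_apply, Fin.sum_univ_two, hA, hgs, Matrix.single, mul_assoc,
        add_comm]
  haveI : @CompleteSpace (Matrix (Fin 2) (Fin 2) 𝔸) PseudoMetricSpace.toUniformSpace :=
    inferInstanceAs (CompleteSpace (Matrix (Fin 2) (Fin 2) 𝔸))
  have hPhi : ∀ s : ℝ, HasDerivAt (fun s : ℝ => exp ((t - s) • A))
      (-(A * exp ((t - s) • A))) s := by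
    intro s
    have hg1 : HasDerivAt (fun u : ℝ => exp (u • A)) (A * exp ((t - s) • A)) (t - s) :=
      hasDerivAt_exp_smul_const' A (t - s)
    have hh : HasDerivAt (fun s : ℝ => t - s) (-1) s := (hasDerivAt_id s).const_sub t
    have := HasDerivAt.scomp s hg1 hh
    simp at this
    exact this
  have hH : ∀ s : ℝ, HasDerivAt (fun s : ℝ => F s * exp ((t - s) • A)) 0 s := by
    intro s
    have := (hF s).mul (hPhi s)
    simp [mul_assoc, mul_neg] at this
    exact this
  have hconst := is_const_of_deriv_eq_zero (𝕜 := ℝ)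
      (f := fun s : ℝ => F s * exp ((t - s) • A))
      (fun x => (hH x).differentiableAt) (fun x => (hH x).deriv) t 0
  have hF0 : F 0 = 1 := by
    rw [hFform 0]
    simp [hGdef, Matrix.one_fin_two]
  rw [sub_self, zero_smul, exp_zero, mul_one, sub_zero, hF0, one_mul] at hconst
  rw [← hconst, hFform t]
end aux2

end helper17

open NormedSpace in
/-- For a `2×2` lower triangular matrix `A = [[a, 0], [b, c]]` over a complex unital
Banach algebra and `t > 0`, the exponential `exp(tA)` has diagonal entries `e^{ta}`,
`e^{tc}`, zero upper entry, and lower entry `∫₀^t e^{sc} b e^{(t−s)a} ds`. -/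
theorem stmt_17 {𝔸 : Type*} [NormedRing 𝔸] [NormedAlgebra ℂ 𝔸] [CompleteSpace 𝔸]
    (a b c : 𝔸) (A : Matrix (Fin 2) (Fin 2) 𝔸) (hA : A = !![a, 0; b, c])
    (t : ℝ) (ht : 0 < t) :
    (NormedSpace.exp ((t : ℂ) • A)) 0 0 = NormedSpace.exp ((t : ℂ) • a) ∧
    (NormedSpace.exp ((t : ℂ) • A)) 0 1 = 0 ∧
    (NormedSpace.exp ((t : ℂ) • A)) 1 1 = NormedSpace.exp ((t : ℂ) • c) ∧
    (NormedSpace.exp ((t : ℂ) • A)) 1 0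
      = ∫ s in (0 : ℝ)..t,
          NormedSpace.exp ((s : ℂ) • c) * b * NormedSpace.exp (((t - s : ℝ) : ℂ) • a) := by
  subst hA
  letI : NormedRing (Matrix (Fin 2) (Fin 2) 𝔸) := Matrix.linftyOpNormedRing
  letI : NormedAlgebra ℝ (Matrix (Fin 2) (Fin 2) 𝔸) := Matrix.linftyOpNormedAlgebra
  letI : NormedAlgebra ℂ (Matrix (Fin 2) (Fin 2) 𝔸) := Matrix.linftyOpNormedAlgebra
  letI : NormedAlgebra ℚ 𝔸 := NormedAlgebra.restrictScalars ℚ ℂ 𝔸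
  have hm : NormedSpace.exp ((t : ℂ) • (!![a, 0; b, c] : Matrix (Fin 2) (Fin 2) 𝔸)) =
      !![exp (t • a), 0;
         (∫ u in (0:ℝ)..t, exp (u • c) * b * exp (-(u • a))) * exp (t • a),
         exp (t • c)] := by
    rw [Complex.coe_smul]
    exact key17 a b c t
  have h00 : NormedSpace.exp ((t : ℂ) • (!![a, 0; b, c] : Matrix (Fin 2) (Fin 2) 𝔸)) 0 0
      = NormedSpace.exp ((t : ℂ) • a) := by
    rw [hm, Complex.coe_smul]; simp
  have h01 : NormedSpace.exp ((t : ℂ) • (!![a, 0; b, c] : Matrix (Fin 2) (Fin 2) 𝔸)) 0 1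
      = 0 := by
    rw [hm]; simp
  have h11 : NormedSpace.exp ((t : ℂ) • (!![a, 0; b, c] : Matrix (Fin 2) (Fin 2) 𝔸)) 1 1
      = NormedSpace.exp ((t : ℂ) • c) := by
    rw [hm, Complex.coe_smul]; simp
  have h10 : NormedSpace.exp ((t : ℂ) • (!![a, 0; b, c] : Matrix (Fin 2) (Fin 2) 𝔸)) 1 0
      = ∫ s in (0 : ℝ)..t,
          NormedSpace.exp ((s : ℂ) • c) * b * NormedSpace.exp (((t - s : ℝ) : ℂ) • a) := by
    rw [hm]
    have hcont : Continuous fun u : ℝ => exp (u • c) * b * exp (-(u • a)) := by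
      apply Continuous.mul
      · exact ((exp_continuous).comp ((continuous_id).smul continuous_const)).mul continuous_const
      · exact (exp_continuous).comp (((continuous_id).smul continuous_const).neg)
    have hL := ((ContinuousLinearMap.mul ℝ 𝔸).flip (exp (t • a))).intervalIntegral_comp_comm
      (hcont.intervalIntegrable (μ := MeasureTheory.volume) 0 t)
    simp only [ContinuousLinearMap.flip_apply, ContinuousLinearMap.mul_apply'] at hL
    have hent : (!![exp (t • a), 0;
         (∫ u in (0:ℝ)..t, exp (u • c) * b * exp (-(u • a))) * exp (t • a),
         exp (t • c)] : Matrix (Fin 2) (Fin 2) 𝔸) 1 0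
        = (∫ u in (0:ℝ)..t, exp (u • c) * b * exp (-(u • a))) * exp (t • a) := by simp
    rw [hent, ← hL]
    apply intervalIntegral.integral_congr
    intro u hu
    have hcomm : Commute (-(u • a)) (t • a) :=
      Commute.neg_left (((Commute.refl a).smul_left u).smul_right t)
    have hmul : exp (-(u • a)) * exp (t • a) = exp ((t - u) • a) := by
      rw [← exp_add_of_commute hcomm, sub_smul, sub_eq_neg_add]
    simp only [Complex.coe_smul]
    rw [mul_assoc, hmul]
  exact ⟨h00, h01, h11, h10⟩
end

section
/- Let 𝔸 be a complex unital Banach algebra and let A be the 3×3 lower triangular matrix over 𝔸 with entries A = [[a₁₁, 0, 0], [a₂₁, a₂₂, 0], [a₃₁, a₃₂, a₃₃]]. Then for every t > 0 the (3,1) entry of the matrix exponential exp(t·A) equals ∫_{0}^{t} e^{s a₃₃} · a₃₁ · e^{(t−s) a₁₁} ds + ∫_{0}^{t} ∫_{0}^{r} e^{s a₃₃} · a₃₂ · e^{(r−s) a₂₂} · a₂₁ · e^{(t−r) a₁₁} ds dr. -/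
open MeasureTheory NormedSpace

section Aux

variable {𝔹 : Type*} [NormedRing 𝔹] [NormedAlgebra ℝ 𝔹] [CompleteSpace 𝔹]

private lemma exp_mul_exp (a : 𝔹) (s t : ℝ) :
    exp (s • a) * exp (t • a) = exp ((s + t) • a) := by
  letI : NormedAlgebra ℚ 𝔹 := .restrictScalars ℚ ℝ 𝔹
  rw [add_smul, exp_add_of_commute (((Commute.refl a).smul_left s).smul_right t)]

private lemma cont_exp_aff (a : 𝔹) {g : ℝ → ℝ} (hg : Continuous g) :
    Continuous fun s : ℝ => exp (g s • a) := by
  letI : NormedAlgebra ℚ 𝔹 := .restrictScalars ℚ ℝ 𝔹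
  exact exp_continuous.comp (hg.smul continuous_const)

private lemma ode_sol (a c : 𝔹) (f h : ℝ → 𝔹)
    (hf : ∀ u : ℝ, HasDerivAt f (f u * a + h u) u)
    (hh : Continuous h) (hf0 : f 0 = c) (t : ℝ) :
    f t = c * exp (t • a) + ∫ s in (0:ℝ)..t, h s * exp ((t - s) • a) := by
  have hca : ∀ s : ℝ, exp (s • a) * a = a * exp (s • a) := fun s =>
    (((Commute.refl a).smul_left s).exp_left)
  have hexp : ∀ s : ℝ, HasDerivAt (fun u : ℝ => exp ((-u) • a))
      (-(exp ((-s) • a) * a)) s := by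
    intro s
    have := (hasDerivAt_exp_smul_const (𝕂 := ℝ) a (-s)).scomp s (hasDerivAt_neg s)
    simpa [Function.comp_def] using this
  have hg : ∀ s : ℝ, HasDerivAt (fun u : ℝ => f u * exp ((-u) • a))
      (h s * exp ((-s) • a)) s := by
    intro s
    have hmul := (hf s).mul (hexp s)
    convert hmul using 1
    · rfl
    rw [hca]
    noncomm_ring
  have hce : Continuous fun s : ℝ => exp ((-s) • a) := cont_exp_aff a continuous_neg
  have hcf : Continuous f := continuous_iff_continuousAt.2 fun s => (hf s).continuousAt
  have hint : IntervalIntegrable (fun s : ℝ => h s * exp ((-s) • a)) volume 0 t :=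
    (hh.mul hce).intervalIntegrable 0 t
  have hFTC : (∫ s in (0:ℝ)..t, h s * exp ((-s) • a))
      = f t * exp ((-t) • a) - f 0 * exp ((-(0:ℝ)) • a) :=
    intervalIntegral.integral_eq_sub_of_hasDerivAt (fun s _ => hg s) hint
  have h0 : f 0 * exp ((-(0:ℝ)) • a) = c := by
    simp [hf0]
  have hgt : f t * exp ((-t) • a) = c + ∫ s in (0:ℝ)..t, h s * exp ((-s) • a) := by
    rw [hFTC, h0]; abel
  have hft : f t = (f t * exp ((-t) • a)) * exp (t • a) := by
    rw [mul_assoc, exp_mul_exp, neg_add_cancel, zero_smul, exp_zero, mul_one]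
  rw [hft, hgt, add_mul]
  congr 1
  have key := ((ContinuousLinearMap.mul ℝ 𝔹).flip (exp (t • a))).intervalIntegral_comp_comm hint
  calc (∫ s in (0:ℝ)..t, h s * exp ((-s) • a)) * exp (t • a)
      = (ContinuousLinearMap.mul ℝ 𝔹).flip (exp (t • a))
          (∫ s in (0:ℝ)..t, h s * exp ((-s) • a)) := by
        simp [ContinuousLinearMap.flip_apply, ContinuousLinearMap.mul_apply']
    _ = ∫ s in (0:ℝ)..t, (ContinuousLinearMap.mul ℝ 𝔹).flip (exp (t • a))
          (h s * exp ((-s) • a)) := key.symm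
    _ = ∫ s in (0:ℝ)..t, h s * exp ((t - s) • a) := by
        refine intervalIntegral.integral_congr fun s _ => ?_
        simp only [ContinuousLinearMap.flip_apply, ContinuousLinearMap.mul_apply']
        rw [mul_assoc, exp_mul_exp]
        congr 2
        ring

end Aux

/-- For a `3×3` lower triangular matrix `A` over a complex unital Banach algebra and
`t > 0`, the `(3,1)` entry of `exp(tA)` is
`∫₀^t e^{s a₃₃} a₃₁ e^{(t−s) a₁₁} ds
  + ∫₀^t ∫₀^r e^{s a₃₃} a₃₂ e^{(r−s) a₂₂} a₂₁ e^{(t−r) a₁₁} ds dr`. -/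
theorem stmt_18 {𝔸 : Type*} [NormedRing 𝔸] [NormedAlgebra ℂ 𝔸] [CompleteSpace 𝔸]
    (a11 a21 a22 a31 a32 a33 : 𝔸) (A : Matrix (Fin 3) (Fin 3) 𝔸)
    (hA : A = !![a11, 0, 0; a21, a22, 0; a31, a32, a33])
    (t : ℝ) (ht : 0 < t) :
    (NormedSpace.exp ((t : ℂ) • A)) 2 0
      = (∫ s in (0 : ℝ)..t,
          NormedSpace.exp ((s : ℂ) • a33) * a31
            * NormedSpace.exp (((t - s : ℝ) : ℂ) • a11))
        + ∫ r in (0 : ℝ)..t, ∫ s in (0 : ℝ)..r,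
            NormedSpace.exp ((s : ℂ) • a33) * a32
              * NormedSpace.exp (((r - s : ℝ) : ℂ) • a22) * a21
              * NormedSpace.exp (((t - r : ℝ) : ℂ) • a11) := by
  simp only [Complex.coe_smul]
  letI : SeminormedRing (Matrix (Fin 3) (Fin 3) 𝔸) := Matrix.linftyOpSemiNormedRing
  letI : NormedRing (Matrix (Fin 3) (Fin 3) 𝔸) := Matrix.linftyOpNormedRing
  letI : NormedAlgebra ℝ (Matrix (Fin 3) (Fin 3) 𝔸) := Matrix.linftyOpNormedAlgebra
  -- derivative of the matrix exponential
  haveI : @CompleteSpace (Matrix (Fin 3) (Fin 3) 𝔸) PseudoMetricSpace.toUniformSpace := inferInstanceAs (CompleteSpace (Fin 3 → Fin 3 → 𝔸))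
  have hE : ∀ u : ℝ, HasDerivAt (fun v : ℝ => exp (v • A)) (exp (u • A) * A) u :=
    fun u => hasDerivAt_exp_smul_const (𝕂 := ℝ) A u
  -- entry extraction
  have entryD : ∀ (i j : Fin 3) (u : ℝ),
      HasDerivAt (fun v : ℝ => exp (v • A) i j) ((exp (u • A) * A) i j) u := by
    intro i j u
    set L : Matrix (Fin 3) (Fin 3) 𝔸 →L[ℝ] 𝔸 :=
      (ContinuousLinearMap.proj (R := ℝ) (φ := fun _ : Fin 3 => 𝔸) j).comp
        (ContinuousLinearMap.proj (R := ℝ) (φ := fun _ : Fin 3 => Fin 3 → 𝔸) i) with hL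
    have h1 : HasFDerivAt (𝕜 := ℝ) (E := Matrix (Fin 3) (Fin 3) 𝔸) (F := 𝔸)
        (fun M : Matrix (Fin 3) (Fin 3) 𝔸 => L M) L (exp (u • A)) := L.hasFDerivAt
    exact h1.comp_hasDerivAt u (hE u)
  have hmulA : ∀ (u : ℝ) (i : Fin 3),
      (exp (u • A) * A) i 0 = exp (u • A) i 0 * a11 + exp (u • A) i 1 * a21
        + exp (u • A) i 2 * a31 := by
    intro u i
    rw [Matrix.mul_apply, Fin.sum_univ_three, hA]
    simp [Matrix.cons_val_one, Matrix.head_cons]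
  have hmulA1 : ∀ (u : ℝ) (i : Fin 3),
      (exp (u • A) * A) i 1 = exp (u • A) i 1 * a22 + exp (u • A) i 2 * a32 := by
    intro u i
    rw [Matrix.mul_apply, Fin.sum_univ_three, hA]
    simp [Matrix.cons_val_one, Matrix.head_cons]
  have hmulA2 : ∀ (u : ℝ) (i : Fin 3),
      (exp (u • A) * A) i 2 = exp (u • A) i 2 * a33 := by
    intro u i
    rw [Matrix.mul_apply, Fin.sum_univ_three, hA]
    simp [Matrix.cons_val_one, Matrix.head_cons]
  have hE0 : exp ((0:ℝ) • A) = 1 := by rw [zero_smul, exp_zero]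
  -- (2,2) entry
  have h22 : ∀ u : ℝ, exp (u • A) 2 2 = exp (u • a33) := by
    intro u
    have := ode_sol a33 1 (fun v : ℝ => exp (v • A) 2 2) (fun _ => 0)
      (fun s => by simpa [hmulA2] using entryD 2 2 s)
      continuous_const (by simp [hE0]) u
    simpa using this
  -- (2,1) entry
  have h21 : ∀ u : ℝ, exp (u • A) 2 1
      = ∫ s in (0:ℝ)..u, exp (s • a33) * a32 * exp ((u - s) • a22) := by
    intro u
    have := ode_sol a22 0 (fun v : ℝ => exp (v • A) 2 1)
      (fun s => exp (s • a33) * a32)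
      (fun s => by
        have := entryD 2 1 s
        rw [hmulA1, h22] at this
        exact this)
      ((cont_exp_aff a33 continuous_id).mul continuous_const)
      (by simp [hE0, Matrix.one_apply]) u
    simpa [mul_assoc] using this
  have hc21 : Continuous fun u : ℝ => exp (u • A) 2 1 :=
    continuous_iff_continuousAt.2 fun s => (entryD 2 1 s).continuousAt
  -- (2,0) entry
  have h20 := ode_sol a11 0 (fun v : ℝ => exp (v • A) 2 0)
    (fun s => exp (s • A) 2 1 * a21 + exp (s • a33) * a31)
    (fun s => by
      have := entryD 2 0 s
      rw [hmulA, h22] at this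
      rw [add_assoc] at this
      exact this)
    ((hc21.mul continuous_const).add ((cont_exp_aff a33 continuous_id).mul continuous_const))
    (by simp [hE0, Matrix.one_apply]) t
  rw [h20, zero_mul, zero_add]
  have hsplit : (∫ s in (0:ℝ)..t,
      (exp (s • A) 2 1 * a21 + exp (s • a33) * a31) * exp ((t - s) • a11))
      = (∫ s in (0:ℝ)..t, exp (s • a33) * a31 * exp ((t - s) • a11))
        + ∫ s in (0:ℝ)..t, exp (s • A) 2 1 * a21 * exp ((t - s) • a11) := by
    rw [← intervalIntegral.integral_add]
    · refine intervalIntegral.integral_congr fun s _ => ?_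
      noncomm_ring
    · exact (((cont_exp_aff a33 continuous_id).mul continuous_const).mul
        (cont_exp_aff a11 (continuous_const.sub continuous_id))).intervalIntegrable 0 t
    · exact ((hc21.mul continuous_const).mul
        (cont_exp_aff a11 (continuous_const.sub continuous_id))).intervalIntegrable 0 t
  rw [hsplit]
  congr 1
  refine intervalIntegral.integral_congr fun r _ => ?_
  rw [h21 r]
  have hintc : IntervalIntegrable
      (fun s : ℝ => exp (s • a33) * a32 * exp ((r - s) • a22)) volume 0 r :=
    (((cont_exp_aff a33 continuous_id).mul continuous_const).mul
      (cont_exp_aff a22 (continuous_const.sub continuous_id))).intervalIntegrable 0 r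
  have key := ((ContinuousLinearMap.mul ℝ 𝔸).flip
      (a21 * exp ((t - r) • a11))).intervalIntegral_comp_comm hintc
  rw [mul_assoc]
  calc (∫ s in (0:ℝ)..r, exp (s • a33) * a32 * exp ((r - s) • a22))
        * (a21 * exp ((t - r) • a11))
      = (ContinuousLinearMap.mul ℝ 𝔸).flip (a21 * exp ((t - r) • a11))
          (∫ s in (0:ℝ)..r, exp (s • a33) * a32 * exp ((r - s) • a22)) := by
        simp [ContinuousLinearMap.flip_apply, ContinuousLinearMap.mul_apply']
    _ = ∫ s in (0:ℝ)..r, (ContinuousLinearMap.mul ℝ 𝔸).flip (a21 * exp ((t - r) • a11))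
          (exp (s • a33) * a32 * exp ((r - s) • a22)) := key.symm
    _ = ∫ s in (0:ℝ)..r, exp (s • a33) * a32 * exp ((r - s) • a22) * a21
          * exp ((t - r) • a11) := by
        refine intervalIntegral.integral_congr fun s _ => ?_
        simp only [ContinuousLinearMap.flip_apply, ContinuousLinearMap.mul_apply']
        noncomm_ring
end
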